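/- Let B be an integral domain containing a field k of characteristic zero and D a nonzero locally nilpotent k-derivation on B with kernel A. Then A is algebraically closed in B: any element of B that is algebraic over A lies in A. -/
import Mathlib


/-- A derivation is locally nilpotent if every element is killed by some iterate. -/
def IsLND {k B : Type*} [CommRing k] [CommRing B] [Algebra k B]
    (D : Derivation k B B) : Prop :=
  ∀ b : B, ∃ n : ℕ, (⇑D)^[n] b = 0

/-- `ndeg D b n` says that `n` is the `D`-degree of `b`, i.e. the largest `m` with
`D^[m] b ≠ 0`. -/
def ndeg {k B : Type*} [CommRing k] [CommRing B] [Algebra k B]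
    (D : Derivation k B B) (b : B) (n : ℕ) : Prop :=
  (⇑D)^[n] b ≠ 0 ∧ (⇑D)^[n + 1] b = 0

/-- A derivation is irreducible if the ideal generated by its image is not contained
in any proper principal ideal. -/
def IsIrred {k B : Type*} [CommRing k] [CommRing B] [Algebra k B]
    (D : Derivation k B B) : Prop :=
  ∀ b : B, Ideal.span (Set.range (⇑D)) ≤ Ideal.span {b} → IsUnit b

open Polynomial in
/-- Chain rule with error term: for any polynomial `P` over `B`,
`D (P(b)) = P'(b) * D b + ∑ D(coeff i) * b^i`. -/
lemma deriv_eval_aux {k B : Type*} [CommRing k] [CommRing B] [Algebra k B]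
    (D : Derivation k B B) (b : B) (P : B[X]) :
    D (P.eval b) = P.derivative.eval b * D b + P.sum (fun i a => D a * b ^ i) := by
  induction P using Polynomial.induction_on' with
  | add p q hp hq =>
      rw [eval_add, map_add, hp, hq, derivative_add, eval_add,
        Polynomial.sum_add_index p q _ (fun i => by simp) (fun i a b => by rw [map_add, add_mul])]
      ring
  | monomial n a =>
      rw [eval_monomial, Polynomial.derivative_monomial, eval_monomial,
        Polynomial.sum_monomial_index a _ (by simp)]
      rw [D.leibniz, D.leibniz_pow]
      simp only [smul_eq_mul, nsmul_eq_mul]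
      ring

/-- The kernel of a nonzero locally nilpotent derivation on a domain is algebraically
closed in the ring: any element satisfying a nonzero polynomial relation with
coefficients in the kernel lies in the kernel. -/
theorem kernel_algebraically_closed {k B : Type*} [Field k] [CharZero k]
    [CommRing B] [IsDomain B] [Algebra k B]
    (D : Derivation k B B) (hD : D ≠ 0) (hlnd : IsLND D)
    (b : B) (P : Polynomial B) (hP : P ≠ 0)
    (hcoeff : ∀ i : ℕ, D (P.coeff i) = 0)
    (heval : Polynomial.eval b P = 0) :
    D b = 0 := by
  have : CharZero B := charZero_of_injective_algebraMap (algebraMap k B).injective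
  -- strong induction on the degree
  have key : ∀ n : ℕ, ∀ P : Polynomial B, P.natDegree ≤ n → P ≠ 0 →
      (∀ i : ℕ, D (P.coeff i) = 0) → Polynomial.eval b P = 0 → D b = 0 := by
    intro n
    induction n with
    | zero =>
        intro P hdeg hP0 hc he
        exfalso
        rw [Polynomial.eq_C_of_natDegree_le_zero hdeg] at hP0 he
        rw [Polynomial.eval_C] at he
        exact hP0 (by rw [he, map_zero])
    | succ n ih =>
        intro P hdeg hP0 hc he
        by_contra hb
        have hchain := deriv_eval_aux D b P
        have hsum : P.sum (fun i a => D a * b ^ i) = 0 := by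
          rw [Polynomial.sum]
          exact Finset.sum_eq_zero fun i _ => by rw [hc i, zero_mul]
        rw [he, map_zero, hsum, add_zero] at hchain
        have hPd : Polynomial.eval b P.derivative = 0 :=
          (mul_eq_zero.mp hchain.symm).resolve_right hb
        by_cases hd0 : P.natDegree = 0
        · rw [Polynomial.eq_C_of_natDegree_le_zero hd0.le] at hP0 he
          rw [Polynomial.eval_C] at he
          exact hP0 (by rw [he, map_zero])
        · have hder0 : P.derivative ≠ 0 := by
            intro h
            exact hd0 ((Polynomial.natDegree_eq_zero_of_derivative_eq_zero h))
          have hderdeg : P.derivative.natDegree ≤ n := by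
            have := Polynomial.natDegree_derivative_lt hd0
            omega
          refine absurd (ih P.derivative hderdeg hder0 (fun i => ?_) hPd) hb
          simp [Polynomial.coeff_derivative, hc (i + 1), Derivation.map_natCast,
            Derivation.map_one_eq_zero]
  exact key P.natDegree P le_rfl hP hcoeff heval
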